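/- If a run R is k-upper then R is l-upper for every l with k ≤ l ≤ n. -/

import Mathlib

namespace HOPDA

/-- A `k`-stack with data: a 0-stack is a symbol from `Γ` together with an optional
data value from `D` (`none` = no-data); a `(k+1)`-stack is a list of `k`-stacks
(top of the stack is the last element of the list). -/
def Stk (Γ D : Type) : ℕ → Type
  | 0 => Γ × Option D
  | k+1 => List (Stk Γ D k)

variable {Γ D : Type}

def Stk.toList {k : ℕ} (s : Stk Γ D (k+1)) : List (Stk Γ D k) := s
def Stk.ofList {k : ℕ} (l : List (Stk Γ D k)) : Stk Γ D (k+1) := l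
def Stk.toAtom (s : Stk Γ D 0) : Γ × Option D := s
def Stk.ofAtom (x : Γ × Option D) : Stk Γ D 0 := x

/-- Stack operations: `pop k` and `push k α`. -/
inductive Op (Γ : Type) where
  | pop : ℕ → Op Γ
  | push : ℕ → Γ → Op Γ

def Op.level {Γ : Type} : Op Γ → ℕ
  | .pop k => k
  | .push k _ => k

/-- `pop^k`: remove the topmost `(k-1)`-stack of the topmost `k`-stack;
it may only be executed when the topmost `k`-stack has size at least 2. -/
def popAt (k : ℕ) : (n : ℕ) → Stk Γ D n → Option (Stk Γ D n)
  | 0, _ => none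
  | n+1, s =>
    if k = n + 1 then
      if 2 ≤ s.toList.length then some (Stk.ofList s.toList.dropLast) else none
    else
      match s.toList.getLast? with
      | none => none
      | some t => (popAt k n t).map (fun t' => Stk.ofList (s.toList.dropLast.concat t'))

/-- Replace the topmost 0-stack by `x`. -/
def setTop0 (x : Γ × Option D) : (n : ℕ) → Stk Γ D n → Option (Stk Γ D n)
  | 0, _ => some (Stk.ofAtom x)
  | n+1, s =>
    match s.toList.getLast? with
    | none => none
    | some t => (setTop0 x n t).map (fun t' => Stk.ofList (s.toList.dropLast.concat t'))

/-- `push^k_α` with data `d`: duplicate the topmost `(k-1)`-stack, and replace the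
topmost 0-stack of the copy by `(α, d)`. -/
def pushAt (k : ℕ) (α : Γ) (d : Option D) : (n : ℕ) → Stk Γ D n → Option (Stk Γ D n)
  | 0, _ => none
  | n+1, s =>
    if k = n + 1 then
      match s.toList.getLast? with
      | none => none
      | some t => (setTop0 (α, d) n t).map (fun t' => Stk.ofList (s.toList.concat t'))
    else
      match s.toList.getLast? with
      | none => none
      | some t => (pushAt k α d n t).map (fun t' => Stk.ofList (s.toList.dropLast.concat t'))

/-- The topmost 0-stack of a stack. -/
def top0 : (n : ℕ) → Stk Γ D n → Option (Γ × Option D)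
  | 0, s => some s.toAtom
  | n+1, s => s.toList.getLast?.bind (top0 n)

/-- Apply an operation (with read data value `d`, `none` for ε) to an `n`-stack. -/
def applyOp (op : Op Γ) (d : Option D) (n : ℕ) (s : Stk Γ D n) : Option (Stk Γ D n) :=
  match op with
  | .pop k => popAt k n s
  | .push k α => pushAt k α d n s

/-- The address (sequence of indices, counted from the bottom of each stack,
outermost level first) of the topmost `j`-stack of an `n`-stack, if defined. -/
def topAddr : (n : ℕ) → Stk Γ D n → (j : ℕ) → Option (List ℕ)
  | 0, _, j => if j = 0 then some [] else none
  | n+1, s, j =>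
    if j = n + 1 then some [] else
    match s.toList.getLast? with
    | none => none
    | some t => (topAddr n t j).map (fun p => (s.toList.length - 1) :: p)

/-- The size (number of `(r-1)`-stacks) of the topmost `r`-stack. -/
def topLen : (n : ℕ) → Stk Γ D n → (r : ℕ) → Option ℕ
  | 0, _, _ => none
  | n+1, s, r =>
    if r = n + 1 then some s.toList.length
    else s.toList.getLast?.bind (fun t => topLen n t r)

/-- The topmost `j`-stack itself. -/
def topGet : (n : ℕ) → Stk Γ D n → (j : ℕ) → Option (Stk Γ D j)
  | 0, s, j => if h : j = 0 then some (cast (congrArg (Stk Γ D) h.symm) s) else none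
  | n+1, s, j =>
    if h : j = n + 1 then some (cast (congrArg (Stk Γ D) h.symm) s)
    else s.toList.getLast?.bind (fun t => topGet n t j)

/-- Validity of an address in a stack. -/
def validAddr : (n : ℕ) → Stk Γ D n → List ℕ → Prop
  | _, _, [] => True
  | 0, _, _ :: _ => False
  | n+1, s, i :: rest => ∃ h : i < s.toList.length, validAddr n (s.toList.get ⟨i, h⟩) rest

/-- The origin map of one step: given the stack `s` before the operation and the
address of a substack in the stack after the operation, return the address of the
substack it is a (traced) copy of.  A `pop` does not move any surviving substack;
a `push^r` creates, at the top, a copy of the old topmost `(r-1)`-stack, and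
substacks of the copy originate from the corresponding substacks of the source. -/
def originOp {n : ℕ} (op : Op Γ) (s : Stk Γ D n) (a : List ℕ) : List ℕ :=
  match op with
  | .pop _ => a
  | .push r _ =>
    match topAddr n s r, topLen n s r with
    | some p, some L =>
      if a.take (n - r) = p ∧ a[(n - r)]? = some L then a.set (n - r) (L - 1) else a
    | _, _ => a

/-- A run of length `len`: a sequence of stacks connected by operations.
`dat i` is the data value read at step `i` (`none` for no data / ε);
a `pop` may read a data value only if it equals the one stored in the topmost 0-stack. -/
structure Run (Γ D : Type) (n : ℕ) where
  len : ℕ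
  stk : ℕ → Stk Γ D n
  op : ℕ → Op Γ
  dat : ℕ → Option D
  ok : ∀ i < len, applyOp (op i) (dat i) n (stk i) = some (stk (i + 1)) ∧
        (∀ k, op i = Op.pop k → dat i = none ∨ ∃ γ, top0 n (stk i) = some (γ, dat i))

variable {n : ℕ}

/-- Trace an address one step backwards (from configuration `i+1` to configuration `i`). -/
def backStep (R : Run Γ D n) (i : ℕ) (a : List ℕ) : List ℕ :=
  originOp (R.op i) (R.stk i) a

/-- `backB R i j a`: the address in configuration `i` from which the substack at
address `a` in configuration `j` is traced (for `i ≤ j`). -/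
def backB (R : Run Γ D n) (i : ℕ) : ℕ → List ℕ → List ℕ
  | j, a => if h : i < j then backB R i (j - 1) (backStep R (j - 1) a) else a
  termination_by j => j
  decreasing_by omega

/-- `R` is `k`-upper: the topmost `k`-stack of the last configuration is a traced
(possibly modified) copy of the topmost `k`-stack of the first configuration. -/
def Upper (R : Run Γ D n) (k : ℕ) : Prop :=
  ∃ a b, topAddr n (R.stk 0) k = some a ∧ topAddr n (R.stk R.len) k = some b ∧
    backB R 0 R.len b = a ∧ ∀ i ≤ R.len, validAddr n (R.stk i) (backB R i R.len b)

/-- `R` is a `k`-return: the topmost `(k-1)`-stack of the last configuration is a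
traced copy of the second topmost `(k-1)`-stack of the first configuration
(in particular the topmost `k`-stack initially has size at least 2), and while
tracing this copy it is never the topmost `(k-1)`-stack of `R i` for `i < R.len`. -/
def IsReturn (R : Run Γ D n) (k : ℕ) : Prop :=
  ∃ p L b, topAddr n (R.stk 0) k = some p ∧ topLen n (R.stk 0) k = some L ∧ 2 ≤ L ∧
    topAddr n (R.stk R.len) (k - 1) = some b ∧
    backB R 0 R.len b = p.concat (L - 2) ∧
    (∀ i ≤ R.len, validAddr n (R.stk i) (backB R i R.len b)) ∧
    (∀ i < R.len, topAddr n (R.stk i) (k - 1) ≠ some (backB R i R.len b))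

/-- `Splits R S T`: the run `R` is the composition `S ∘ T` of the runs `S` and `T`. -/
def Splits (R S T : Run Γ D n) : Prop :=
  R.len = S.len + T.len ∧ S.stk S.len = T.stk 0 ∧
  (∀ i ≤ S.len, R.stk i = S.stk i) ∧
  (∀ i < S.len, R.op i = S.op i ∧ R.dat i = S.dat i) ∧
  (∀ i ≤ T.len, R.stk (S.len + i) = T.stk i) ∧
  (∀ i < T.len, R.op (S.len + i) = T.op i ∧ R.dat (S.len + i) = T.dat i)

/-- The run `R` with its first step removed (`R[1..|R|]`). -/
def Run.tail (R : Run Γ D n) : Run Γ D n where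
  len := R.len - 1
  stk i := R.stk (i + 1)
  op i := R.op (i + 1)
  dat i := R.dat (i + 1)
  ok i hi := R.ok (i + 1) (by omega)

lemma take_originOp {n : ℕ} (op : Op Γ) (s : Stk Γ D n) (a : List ℕ) (m : ℕ) :
    originOp op s (a.take m) = (originOp op s a).take m := by
  cases op with
  | pop => rfl
  | push r γ =>
    dsimp only [originOp]
    cases hp : topAddr n s r with
    | none => rfl
    | some p =>
      cases hL : topLen n s r with
      | none => rfl
      | some L =>
        dsimp only
        by_cases hm : n - r < m
        · by_cases hc : a.take (n - r) = p ∧ a[(n-r)]? = some L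
          · rw [if_pos hc, if_pos ?_, List.take_set]
            refine ⟨?_, ?_⟩
            · rw [List.take_take, Nat.min_eq_left hm.le, hc.1]
            · rw [List.getElem?_take_of_lt hm, hc.2]
          · rw [if_neg hc, if_neg ?_]
            intro ⟨h1, h2⟩
            rw [List.take_take, Nat.min_eq_left hm.le] at h1
            rw [List.getElem?_take_of_lt hm] at h2
            exact hc ⟨h1, h2⟩
        · have hnone : (a.take m)[(n-r)]? = none :=
            List.getElem?_eq_none (by
              have := List.length_take_le m a; omega)
          have hc' : ¬((a.take m).take (n - r) = p ∧ (a.take m)[(n-r)]? = some L) := by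
            intro ⟨_, h2⟩; rw [hnone] at h2; cases h2
          rw [if_neg hc']
          by_cases hc : a.take (n - r) = p ∧ a[(n-r)]? = some L
          · rw [if_pos hc, List.take_set,
              List.set_eq_of_length_le (by have := List.length_take_le m a; omega)]
          · rw [if_neg hc]

lemma backB_take (R : Run Γ D n) (i j : ℕ) (a : List ℕ) (m : ℕ) :
    backB R i j (a.take m) = (backB R i j a).take m := by
  induction j using Nat.strong_induction_on generalizing a with
  | _ j ih =>
    by_cases h : i < j
    · rw [backB, dif_pos h]
      conv_rhs => rw [backB, dif_pos h]
      rw [backStep, backStep, take_originOp, ih (j - 1) (by omega)]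
    · rw [backB, dif_neg h]
      conv_rhs => rw [backB, dif_neg h]

lemma topAddr_take : ∀ (n : ℕ) (s : Stk Γ D n) (k l : ℕ), k ≤ l → l ≤ n →
    ∀ a, topAddr n s k = some a → topAddr n s l = some (a.take (n - l)) := by
  intro n
  induction n with
  | zero =>
    intro s k l hkl hln a ha
    have hk : k = 0 := by omega
    have hl : l = 0 := by omega
    subst hk hl
    simp only [topAddr, if_pos rfl, Option.some.injEq] at ha
    simp [topAddr, ← ha]
  | succ n ih =>
    intro s k l hkl hln a ha
    by_cases hl : l = n + 1
    · subst hl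
      simp [topAddr]
    · have hln' : l ≤ n := by omega
      have hk : k ≠ n + 1 := by omega
      rw [topAddr, if_neg hk] at ha
      rw [topAddr, if_neg hl]
      cases hgl : s.toList.getLast? with
      | none => rw [hgl] at ha; simp at ha
      | some t =>
        rw [hgl] at ha
        dsimp only at ha ⊢
        cases hta : topAddr n t k with
        | none => rw [hta] at ha; simp at ha
        | some a' =>
          rw [hta] at ha
          simp only [Option.map_some, Option.some.injEq] at ha
          rw [ih t k l hkl hln' a' hta]
          simp only [Option.map_some, Option.some.injEq]
          rw [← ha]
          have h2 : n + 1 - l = (n - l) + 1 := by omega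
          rw [h2, List.take_succ_cons]

lemma validAddr_take : ∀ (n : ℕ) (s : Stk Γ D n) (a : List ℕ) (m : ℕ),
    validAddr n s a → validAddr n s (a.take m) := by
  intro n
  induction n with
  | zero =>
    intro s a m h
    cases a with
    | nil => rw [List.take_nil]; exact h
    | cons x rest => exact absurd h (by simp [validAddr])
  | succ n ih =>
    intro s a m h
    cases a with
    | nil => rw [List.take_nil]; exact h
    | cons i rest =>
      cases m with
      | zero => exact trivial
      | succ m' =>
        obtain ⟨hi, hv⟩ := h
        exact ⟨hi, ih _ rest m' hv⟩

/-- if a run `R` is `k`-upper then `R` is `l`-upper for every `k ≤ l ≤ n`. -/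
theorem upper_mono {Γ D : Type} {n : ℕ} (k l : ℕ) (hkl : k ≤ l) (hln : l ≤ n)
    (R : Run Γ D n) (h : Upper R k) : Upper R l := by
  obtain ⟨a, b, ha, hb, hab, hvalid⟩ := h
  refine ⟨a.take (n - l), b.take (n - l), topAddr_take n _ k l hkl hln a ha,
    topAddr_take n _ k l hkl hln b hb, ?_, ?_⟩
  · rw [backB_take, hab]
  · intro i hi
    rw [backB_take]
    exact validAddr_take _ _ _ _ (hvalid i hi)

end HOPDA
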